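/- Fix x ∈ M, let n ≥ 1, m ≥ 0, and let X_1,…,X_{n+m} be drawn i.i.d. from μ. Let x* be the sample point nearest to x in ρ (ties broken by index). Suppose an estimated distance d̂ is given which, almost surely over the draw of the sample, satisfies (1−δ)·ρ(X_i,X_j) ≤ d̂(i,j) ≤ (1+δ)·ρ(X_i,X_j) for all 1 ≤ i,j ≤ n+m, for a fixed δ ∈ (0,1). Let X_G^{(n)}(x*) denote the point among the first n samples with smallest d̂-distance to x* (ties broken by index). Then E[ ρ(x*, X_G^{(n)}(x*))² ] ≤ (2(1+δ)²/((1−δ)²·(1 − e^{−Q})²))·n^{−2/d} + diam(M)²·e^{−Q·R^d·n}. -/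

import Mathlib

open MeasureTheory
open scoped ENNReal

lemma aux_sq_sum (N : ℕ) : ∑ k ∈ Finset.range N, (2*(k:ℝ)+1) = (N:ℝ)^2 := by
  induction N with
  | zero => simp
  | succ N ih => rw [Finset.sum_range_succ, ih]; push_cast; ring

lemma aux_sum_bound {q : ℝ} (hq0 : 0 ≤ q) (hq1 : q < 1) (N : ℕ) :
    ∑ k ∈ Finset.range N, (2*(k:ℝ)+1) * q^k ≤ (1+q)/(1-q)^2 := by
  have hq1' : (0:ℝ) < 1 - q := by linarith
  have hnorm : ‖q‖ < 1 := by rwa [Real.norm_of_nonneg hq0]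
  have hsum1 : Summable (fun k : ℕ => (k:ℝ) * q^k) := by
    simpa using summable_pow_mul_geometric_of_norm_lt_one 1 hnorm
  have hsum2 : Summable (fun k : ℕ => q^k) := summable_geometric_of_lt_one hq0 hq1
  have hsum : Summable (fun k : ℕ => (2*(k:ℝ)+1) * q^k) := by
    refine Summable.congr ((hsum1.mul_left 2).add hsum2) fun k => by ring
  have h1 : ∑ k ∈ Finset.range N, (2*(k:ℝ)+1) * q^k
      ≤ ∑' k : ℕ, (2*(k:ℝ)+1) * q^k :=
    Summable.sum_le_tsum _ (fun k _ => by positivity) hsum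
  have h2 : ∑' k : ℕ, (2*(k:ℝ)+1) * q^k = 2 * (q/(1-q)^2) + 1/(1-q) := by
    have he : (fun k : ℕ => (2*(k:ℝ)+1) * q^k)
        = fun k : ℕ => 2*((k:ℝ)*q^k) + q^k := by funext k; ring
    rw [he, Summable.tsum_add (hsum1.mul_left 2) hsum2, tsum_mul_left,
      tsum_coe_mul_geometric_of_norm_lt_one hnorm, tsum_geometric_of_lt_one hq0 hq1]
    rw [one_div]
  rw [h2] at h1
  refine h1.trans (le_of_eq ?_)
  field_simp
  ring

lemma aux_levels {α Z : ℝ} (hα : 0 < α) (hZ : 0 ≤ Z) :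
    ∀ N : ℕ, 1 ≤ N → Z ≤ N * α →
    Z^2 ≤ α^2 + ∑ k ∈ Finset.Ico 1 N, ((2*(k:ℝ)+1) * α^2) * (if (k:ℝ)*α < Z then 1 else 0) := by
  intro N hN
  induction N, hN using Nat.le_induction with
  | base =>
    intro hZα
    simp only [Nat.cast_one, one_mul] at hZα
    simp [pow_le_pow_left₀ hZ hZα 2]
  | succ N hN ih =>
    intro hZα
    rw [Finset.sum_Ico_succ_top hN]
    rcases le_or_gt Z ((N:ℝ) * α) with h | h
    · have := ih h
      have hterm : 0 ≤ ((2*(N:ℝ)+1) * α^2) * (if (N:ℝ)*α < Z then 1 else 0) := by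
        positivity
      linarith
    · -- all indicators are 1
      have hind : ∀ k ∈ Finset.Ico 1 (N+1),
          ((2*(k:ℝ)+1) * α^2) * (if (k:ℝ)*α < Z then 1 else 0) = (2*(k:ℝ)+1) * α^2 := by
        intro k hk
        have hk' : k ≤ N := by
          have := (Finset.mem_Ico.mp hk).2; omega
        have : (k:ℝ)*α ≤ (N:ℝ)*α := by
          have : (k:ℝ) ≤ (N:ℝ) := by exact_mod_cast hk'
          nlinarith
        rw [if_pos (lt_of_le_of_lt this h), mul_one]
      have hsum : ∑ k ∈ Finset.Ico 1 (N+1), ((2*(k:ℝ)+1) * α^2) * (if (k:ℝ)*α < Z then 1 else 0)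
          = (((N:ℝ)+1)^2 - 1) * α^2 := by
        rw [Finset.sum_congr rfl hind, ← Finset.sum_mul]
        have : ∑ k ∈ Finset.Ico 1 (N+1), (2*(k:ℝ)+1) = ((N:ℝ)+1)^2 - 1 := by
          have h0 : ∑ k ∈ Finset.range (N+1), (2*(k:ℝ)+1)
              = (2*(0:ℝ)+1) + ∑ k ∈ Finset.Ico 1 (N+1), (2*(k:ℝ)+1) := by
            rw [Finset.range_eq_Ico]
            simpa using Finset.sum_eq_sum_Ico_succ_bot (Nat.succ_pos N) (fun k => (2*(k:ℝ)+1))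
          have h1 := aux_sq_sum (N+1)
          rw [h0] at h1
          push_cast at h1 ⊢
          linarith
        rw [this]
      rw [← Finset.sum_Ico_succ_top hN, hsum]
      have hZ2 : Z^2 ≤ (((N:ℝ)+1) * α)^2 := by
        have : Z ≤ ((N:ℝ)+1) * α := by push_cast at hZα; linarith
        exact pow_le_pow_left₀ hZ this 2
      nlinarith

set_option maxHeartbeats 2000000 in
/-- Fix `x ∈ M`, let `n ≥ 1`, `m ≥ 0`, and draw `X_1,…,X_{n+m}` i.i.d. from
`μ`.  Let `x*` be the sample point nearest to `x` in `ρ` (ties broken by index).  Suppose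
an estimated distance `d̂` satisfies, almost surely,
`(1−δ)·ρ(X_i,X_j) ≤ d̂(i,j) ≤ (1+δ)·ρ(X_i,X_j)` for all `i, j`, with `δ ∈ (0,1)`.
Let `X_G^{(n)}(x*)` be the point among the first `n` samples with smallest `d̂`-distance
to `x*` (ties broken by index).  Then
`E[ρ(x*, X_G^{(n)}(x*))²] ≤ (2(1+δ)²/((1−δ)²(1−e^{−Q})²))·n^{−2/d} + diam(M)²·e^{−Q·R^d·n}`. -/
theorem stmt_6 {M : Type*} [MetricSpace M] [MeasurableSpace M] [BorelSpace M]
    (μ : Measure M) [IsProbabilityMeasure μ]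
    (hMbdd : Bornology.IsBounded (Set.univ : Set M))
    (d : ℕ) (hd : 1 ≤ d) (Q R : ℝ) (hQ : 0 < Q) (hR : 0 < R)
    (hμ : ∀ (z : M) (r : ℝ), 0 < r → r ≤ R →
      ENNReal.ofReal (Q * r ^ d) ≤ μ (Metric.ball z r))
    (x : M) (n m : ℕ) (hn : 1 ≤ n)
    (δ : ℝ) (hδ0 : 0 < δ) (hδ1 : δ < 1)
    (dhat : (Fin (n + m) → M) → Fin (n + m) → Fin (n + m) → ℝ)
    (hmeas : ∀ i j : Fin (n + m), Measurable fun xs => dhat xs i j)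
    (hsymm : ∀ xs : Fin (n + m) → M, ∀ i j : Fin (n + m), dhat xs i j = dhat xs j i)
    (hnonneg : ∀ xs : Fin (n + m) → M, ∀ i j : Fin (n + m), 0 ≤ dhat xs i j)
    (happrox : ∀ᵐ xs ∂(Measure.pi fun _ : Fin (n + m) => μ), ∀ i j : Fin (n + m),
      (1 - δ) * dist (xs i) (xs j) ≤ dhat xs i j ∧
        dhat xs i j ≤ (1 + δ) * dist (xs i) (xs j))
    -- `x*`: the sample point nearest to `x`, ties broken by index
    (star : (Fin (n + m) → M) → Fin (n + m))
    (hstar_min : ∀ xs : Fin (n + m) → M, ∀ j : Fin (n + m), dist x (xs (star xs)) ≤ dist x (xs j))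
    (hstar_tie : ∀ xs : Fin (n + m) → M, ∀ j : Fin (n + m),
      dist x (xs j) ≤ dist x (xs (star xs)) → star xs ≤ j)
    -- `X_G^{(n)}(x*)`: the `d̂`-nearest among the first `n` samples, ties broken by index
    (G : (Fin (n + m) → M) → Fin n)
    (hG_min : ∀ xs : Fin (n + m) → M, ∀ j : Fin n,
      dhat xs (Fin.castAdd m (G xs)) (star xs) ≤ dhat xs (Fin.castAdd m j) (star xs))
    (hG_tie : ∀ xs : Fin (n + m) → M, ∀ j : Fin n,
      dhat xs (Fin.castAdd m j) (star xs) ≤ dhat xs (Fin.castAdd m (G xs)) (star xs) →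
        G xs ≤ j) :
    ∫ xs : Fin (n + m) → M, (dist (xs (star xs)) (xs (Fin.castAdd m (G xs)))) ^ 2
        ∂(Measure.pi fun _ : Fin (n + m) => μ)
      ≤ (2 * (1 + δ) ^ 2 / ((1 - δ) ^ 2 * (1 - Real.exp (-Q)) ^ 2))
          * (n : ℝ) ^ (-(2:ℝ) / (d : ℝ))
        + (Metric.diam (Set.univ : Set M)) ^ 2 * Real.exp (-Q * R ^ d * n) := by
  classical
  haveI hFn : Nonempty (Fin n) := ⟨⟨0, hn⟩⟩
  set P : Measure (Fin (n + m) → M) := Measure.pi fun _ : Fin (n + m) => μ with hPdef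
  haveI : IsProbabilityMeasure P := by rw [hPdef]; infer_instance
  haveI : Nonempty M := by
    by_contra hne
    rw [not_nonempty_iff] at hne
    have h0 : μ Set.univ = 0 := by
      have he : (Set.univ : Set M) = ∅ := Set.eq_empty_of_isEmpty _
      rw [he, measure_empty]
    rw [measure_univ] at h0
    exact one_ne_zero h0
  haveI : SecondCountableTopology M := by
    have htb : TotallyBounded (Set.univ : Set M) := by
      rw [Metric.totallyBounded_iff]
      intro ε hε
      set r : ℝ := min ε (2*R) with hrdef
      have hr0 : 0 < r := lt_min hε (by linarith)
      have hrε : r ≤ ε := min_le_left _ _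
      have hr2R : r/2 ≤ R := by
        have h := min_le_right ε (2*R)
        rw [← hrdef] at h
        linarith
      have hr20 : 0 < r/2 := by linarith
      have hcball0 : 0 < Q * (r/2)^d := by positivity
      set B : ℕ := ⌈1 / (Q * (r/2)^d)⌉₊ with hBdef
      have hcard : ∀ F : Finset M, (∀ y ∈ F, ∀ z ∈ F, y ≠ z → r ≤ dist y z) → F.card ≤ B := by
        intro F hF
        have hdisj : (F : Set M).PairwiseDisjoint (fun y => Metric.ball y (r/2)) := by
          intro y hy z hz hyz
          exact Metric.ball_disjoint_ball (by linarith [hF y hy z hz hyz] : r/2 + r/2 ≤ dist y z)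
        have hμF : (F.card : ℝ≥0∞) * ENNReal.ofReal (Q * (r/2)^d) ≤ 1 := by
          calc (F.card : ℝ≥0∞) * ENNReal.ofReal (Q * (r/2)^d)
              = ∑ _y ∈ F, ENNReal.ofReal (Q * (r/2)^d) := by
                rw [Finset.sum_const, nsmul_eq_mul]
          _ ≤ ∑ y ∈ F, μ (Metric.ball y (r/2)) :=
                Finset.sum_le_sum (fun y _ => hμ y (r/2) hr20 hr2R)
          _ = μ (⋃ y ∈ F, Metric.ball y (r/2)) :=
                (measure_biUnion_finset hdisj (fun y _ => measurableSet_ball)).symm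
          _ ≤ μ Set.univ := measure_mono (Set.subset_univ _)
          _ = 1 := measure_univ
        have h2 : ENNReal.ofReal ((F.card : ℝ) * (Q * (r/2)^d)) ≤ 1 := by
          rw [ENNReal.ofReal_mul (by positivity : (0:ℝ) ≤ (F.card:ℝ))]
          rwa [ENNReal.ofReal_natCast]
        have h1 : (F.card : ℝ) * (Q * (r/2)^d) ≤ 1 := ENNReal.ofReal_le_one.mp h2
        have h3 : (F.card : ℝ) ≤ 1 / (Q * (r/2)^d) := by
          rw [le_div_iff₀ hcball0]
          exact h1
        exact_mod_cast h3.trans (Nat.le_ceil _)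
      have hmax : ∃ F : Finset M, (∀ y ∈ F, ∀ z ∈ F, y ≠ z → r ≤ dist y z) ∧
          ∀ z : M, ∃ y ∈ F, dist z y < r := by
        by_contra hcon
        push_neg at hcon
        have hstep : ∀ F : Finset M, (∀ y ∈ F, ∀ z ∈ F, y ≠ z → r ≤ dist y z) →
            ∃ F' : Finset M, (∀ y ∈ F', ∀ z ∈ F', y ≠ z → r ≤ dist y z) ∧ F.card < F'.card := by
          intro F hF
          obtain ⟨z, hz⟩ := hcon F hF
          have hzF : z ∉ F := by
            intro hzF
            have := hz z hzF
            rw [dist_self] at this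
            linarith
          refine ⟨insert z F, ?_, ?_⟩
          · intro a ha b hb hab
            rcases Finset.mem_insert.mp ha with rfl | ha'
            · rcases Finset.mem_insert.mp hb with rfl | hb'
              · exact absurd rfl hab
              · exact hz b hb'
            · rcases Finset.mem_insert.mp hb with rfl | hb'
              · rw [dist_comm]
                exact hz a ha'
              · exact hF a ha' b hb' hab
          · exact Finset.card_lt_card (Finset.ssubset_insert hzF)
        have hiter : ∀ k : ℕ, ∃ F : Finset M, (∀ y ∈ F, ∀ z ∈ F, y ≠ z → r ≤ dist y z) ∧ k ≤ F.card := by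
          intro k
          induction k with
          | zero => exact ⟨∅, by simp, by simp⟩
          | succ k ih =>
            obtain ⟨F, hF, hk⟩ := ih
            obtain ⟨F', hF', hlt⟩ := hstep F hF
            exact ⟨F', hF', by omega⟩
        obtain ⟨F, hF, hk⟩ := hiter (B+1)
        have := hcard F hF
        omega
      obtain ⟨F, hFsep, hFnet⟩ := hmax
      refine ⟨(F : Set M), F.finite_toSet, fun z _ => ?_⟩
      obtain ⟨y, hy, hzy⟩ := hFnet z
      exact Set.mem_biUnion hy (Metric.mem_ball.mpr (lt_of_lt_of_le hzy hrε))
    haveI hsepM : TopologicalSpace.SeparableSpace M :=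
      TopologicalSpace.isSeparable_univ_iff.mp htb.isSeparable
    exact UniformSpace.secondCountable_of_separable M
  set D : ℝ := Metric.diam (Set.univ : Set M) with hDdef
  have hD0 : 0 ≤ D := Metric.diam_nonneg
  set q : ℝ := Real.exp (-Q) with hqdef
  have hq0 : 0 < q := Real.exp_pos _
  have hq1 : q < 1 := Real.exp_lt_one_iff.mpr (by linarith)
  have hδ' : (0:ℝ) < 1 - δ := by linarith
  have hδ'' : (0:ℝ) < 1 + δ := by linarith
  set c : ℝ := (1 + δ) / (1 - δ) with hcdef
  have hc0 : 0 < c := div_pos hδ'' hδ'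
  have hn0 : (0:ℝ) < (n:ℝ) := by exact_mod_cast hn
  have hd0 : (0:ℝ) < (d:ℝ) := by exact_mod_cast hd
  have hd0' : (d:ℝ) ≠ 0 := ne_of_gt hd0
  set α : ℝ := (n:ℝ) ^ (-(1:ℝ)/(d:ℝ)) with hαdef
  have hα : 0 < α := Real.rpow_pos_of_pos hn0 _
  have hαd : α ^ d = 1 / (n:ℝ) := by
    rw [hαdef, ← Real.rpow_natCast ((n:ℝ) ^ (-(1:ℝ)/(d:ℝ))) d, ← Real.rpow_mul hn0.le]
    rw [show (-(1:ℝ)/(d:ℝ)) * ((d:ℕ):ℝ) = -1 by field_simp]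
    rw [Real.rpow_neg_one, one_div]
  have hα2 : α ^ 2 = (n:ℝ) ^ (-(2:ℝ)/(d:ℝ)) := by
    rw [hαdef, ← Real.rpow_natCast ((n:ℝ) ^ (-(1:ℝ)/(d:ℝ))) 2, ← Real.rpow_mul hn0.le]
    congr 1
    push_cast
    ring
  have hαinv : (n:ℝ) ^ ((1:ℝ)/(d:ℝ)) * α = 1 := by
    rw [hαdef, ← Real.rpow_add hn0, show (1:ℝ)/(d:ℝ) + -1/(d:ℝ) = 0 by ring, Real.rpow_zero]
  set K : ℕ := ⌈R * (n:ℝ) ^ ((1:ℝ)/(d:ℝ))⌉₊ with hKdef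
  have hRn : 0 < R * (n:ℝ) ^ ((1:ℝ)/(d:ℝ)) := by positivity
  have hK1 : 1 ≤ K := Nat.one_le_ceil_iff.mpr hRn
  have hKR : R ≤ (K:ℝ) * α := by
    have h1 : R * (n:ℝ) ^ ((1:ℝ)/(d:ℝ)) ≤ (K:ℝ) := Nat.le_ceil _
    calc R = R * ((n:ℝ) ^ ((1:ℝ)/(d:ℝ)) * α) := by rw [hαinv, mul_one]
    _ = (R * (n:ℝ) ^ ((1:ℝ)/(d:ℝ))) * α := by ring
    _ ≤ (K:ℝ) * α := mul_le_mul_of_nonneg_right h1 hα.le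
  have hkR : ∀ k : ℕ, k < K → (k:ℝ) * α ≤ R := by
    intro k hk
    have h1 : (k:ℝ) < R * (n:ℝ) ^ ((1:ℝ)/(d:ℝ)) := by exact_mod_cast Nat.lt_ceil.mp hk
    calc (k:ℝ) * α ≤ (R * (n:ℝ) ^ ((1:ℝ)/(d:ℝ))) * α := mul_le_mul_of_nonneg_right h1.le hα.le
    _ = R := by rw [mul_assoc, hαinv, mul_one]
  -- events
  set A : ℝ → Set (Fin (n+m) → M) :=
    fun r => {xs | ∀ j : Fin n, r < dist (xs (star xs)) (xs (Fin.castAdd m j))} with hAdef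
  -- basic measurable functions
  have hdistmeas : ∀ (i j : Fin (n+m)), Measurable (fun xs : Fin (n+m) → M => dist (xs i) (xs j)) :=
    fun i j => (measurable_pi_apply i).dist (measurable_pi_apply j)
  have hxdist : ∀ (j : Fin (n+m)), Measurable (fun xs : Fin (n+m) → M => dist x (xs j)) :=
    fun j => measurable_const.dist (measurable_pi_apply j)
  -- characterization of star
  have hstar_eq : ∀ (xs : Fin (n+m) → M) (s : Fin (n+m)),
      star xs = s ↔ ((∀ j, dist x (xs s) ≤ dist x (xs j)) ∧
        ∀ j, j < s → dist x (xs s) < dist x (xs j)) := by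
    intro xs s
    constructor
    · rintro rfl
      refine ⟨hstar_min xs, fun j hj => ?_⟩
      by_contra h
      push_neg at h
      exact absurd (hstar_tie xs j h) (not_le.mpr hj)
    · rintro ⟨h1, h2⟩
      have hle : star xs ≤ s := hstar_tie xs s (h1 (star xs))
      rcases lt_or_eq_of_le hle with hlt | heq
      · exact absurd (hstar_min xs s) (not_le.mpr (h2 (star xs) hlt))
      · exact heq
  have hfibS : ∀ s : Fin (n+m), MeasurableSet {xs : Fin (n+m) → M | star xs = s} := by
    intro s
    have hset : {xs : Fin (n+m) → M | star xs = s}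
        = (⋂ j, {xs | dist x (xs s) ≤ dist x (xs j)}) ∩
          (⋂ j, ⋂ (_ : j < s), {xs : Fin (n+m) → M | dist x (xs s) < dist x (xs j)}) := by
      ext xs
      simp only [Set.mem_setOf_eq, Set.mem_inter_iff, Set.mem_iInter]
      exact hstar_eq xs s
    rw [hset]
    exact (MeasurableSet.iInter fun j => measurableSet_le (hxdist s) (hxdist j)).inter
      (MeasurableSet.iInter fun j => MeasurableSet.iInter fun _ =>
        measurableSet_lt (hxdist s) (hxdist j))
  have hA_meas : ∀ r : ℝ, MeasurableSet (A r) := by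
    intro r
    have hset : A r = ⋃ s, ({xs : Fin (n+m) → M | star xs = s} ∩
        ⋂ j : Fin n, {xs | r < dist (xs s) (xs (Fin.castAdd m j))}) := by
      ext xs
      simp only [hAdef, Set.mem_setOf_eq, Set.mem_iUnion, Set.mem_inter_iff, Set.mem_iInter]
      constructor
      · intro h
        exact ⟨star xs, rfl, fun j => h j⟩
      · rintro ⟨s, hs, h⟩ j
        rw [hs]
        exact h j
    rw [hset]
    exact MeasurableSet.iUnion fun s => (hfibS s).inter
      (MeasurableSet.iInter fun j => measurableSet_lt measurable_const
        (hdistmeas s (Fin.castAdd m j)))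
  -- characterization of G
  have hG_eq : ∀ (xs : Fin (n+m) → M) (g0 : Fin n),
      G xs = g0 ↔ ((∀ j, dhat xs (Fin.castAdd m g0) (star xs) ≤ dhat xs (Fin.castAdd m j) (star xs)) ∧
        ∀ j, j < g0 → dhat xs (Fin.castAdd m g0) (star xs) < dhat xs (Fin.castAdd m j) (star xs)) := by
    intro xs g0
    constructor
    · rintro rfl
      refine ⟨hG_min xs, fun j hj => ?_⟩
      by_contra h
      push_neg at h
      exact absurd (hG_tie xs j h) (not_le.mpr hj)
    · rintro ⟨h1, h2⟩
      have hle : G xs ≤ g0 := hG_tie xs g0 (h1 (G xs))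
      rcases lt_or_eq_of_le hle with hlt | heq
      · exact absurd (hG_min xs g0) (not_le.mpr (h2 (G xs) hlt))
      · exact heq
  have hfibG : ∀ (s : Fin (n+m)) (g0 : Fin n),
      MeasurableSet {xs : Fin (n+m) → M | star xs = s ∧ G xs = g0} := by
    intro s g0
    have hset : {xs : Fin (n+m) → M | star xs = s ∧ G xs = g0}
        = {xs | star xs = s} ∩
          ((⋂ j, {xs : Fin (n+m) → M | dhat xs (Fin.castAdd m g0) s ≤ dhat xs (Fin.castAdd m j) s}) ∩
           (⋂ j, ⋂ (_ : j < g0),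
             {xs : Fin (n+m) → M | dhat xs (Fin.castAdd m g0) s < dhat xs (Fin.castAdd m j) s})) := by
      ext xs
      simp only [Set.mem_setOf_eq, Set.mem_inter_iff, Set.mem_iInter]
      constructor
      · rintro ⟨hs, hg⟩
        obtain ⟨h1, h2⟩ := (hG_eq xs g0).mp hg
        rw [hs] at h1 h2
        exact ⟨hs, h1, h2⟩
      · rintro ⟨hs, h1, h2⟩
        rw [← hs] at h1 h2
        exact ⟨hs, (hG_eq xs g0).mpr ⟨h1, h2⟩⟩
    rw [hset]
    exact (hfibS s).inter
      ((MeasurableSet.iInter fun j => measurableSet_le (hmeas _ _) (hmeas _ _)).inter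
       (MeasurableSet.iInter fun j => MeasurableSet.iInter fun _ =>
         measurableSet_lt (hmeas _ _) (hmeas _ _)))
  set f : (Fin (n+m) → M) → ℝ :=
    fun xs => dist (xs (star xs)) (xs (Fin.castAdd m (G xs))) with hfdef
  have hf_meas : Measurable f := by
    have hset : f = fun xs => ∑ p : Fin (n+m) × Fin n,
        Set.indicator {ys : Fin (n+m) → M | star ys = p.1 ∧ G ys = p.2}
          (fun ys => dist (ys p.1) (ys (Fin.castAdd m p.2))) xs := by
      funext xs
      rw [Finset.sum_eq_single_of_mem (star xs, G xs) (Finset.mem_univ _)]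
      · exact (Set.indicator_of_mem (show xs ∈ {ys : Fin (n+m) → M |
            star ys = (star xs, G xs).1 ∧ G ys = (star xs, G xs).2} from ⟨rfl, rfl⟩) _).symm
      · intro p _ hp
        refine Set.indicator_of_notMem (fun hmem => hp ?_) _
        obtain ⟨h1, h2⟩ := hmem
        exact Prod.ext h1.symm h2.symm
    rw [hset]
    exact Finset.measurable_sum _ fun p _ =>
      ((measurable_pi_apply p.1).dist (measurable_pi_apply (Fin.castAdd m p.2))).indicator
        (hfibG p.1 p.2)
  -- tail bound
  have htail : ∀ r : ℝ, 0 < r → r ≤ R →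
      P (A r) ≤ ENNReal.ofReal (Real.exp (-(Q * r^d * (n:ℝ)))) := by
    intro r hr hrR
    rcases Nat.eq_zero_or_pos m with hm | hm
    · have hempty : A r = ∅ := by
        ext xs
        simp only [hAdef, Set.mem_setOf_eq, Set.mem_empty_iff_false, iff_false, not_forall, not_lt]
        refine ⟨⟨(star xs).val, by omega⟩, ?_⟩
        have heq : Fin.castAdd m ⟨(star xs).val, by omega⟩ = star xs := by
          apply Fin.ext
          simp
        rw [heq, dist_self]
        exact hr.le
      rw [hempty]
      simp
    · haveI hFm : Nonempty (Fin m) := ⟨⟨0, hm⟩⟩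
      set i0 : (Fin m → M) → Fin m := fun t =>
        (Finset.univ.filter (fun i => ∀ i', dist x (t i) ≤ dist x (t i'))).min' (by
          obtain ⟨i, _, hi⟩ := Finset.exists_min_image Finset.univ
            (fun i => dist x (t i)) Finset.univ_nonempty
          exact ⟨i, Finset.mem_filter.mpr
            ⟨Finset.mem_univ _, fun i' => hi i' (Finset.mem_univ _)⟩⟩) with hi0def
      have hi0_min : ∀ (t : Fin m → M) (i' : Fin m), dist x (t (i0 t)) ≤ dist x (t i') := by
        intro t i'
        have hmem := Finset.min'_mem
          (Finset.univ.filter (fun i => ∀ i', dist x (t i) ≤ dist x (t i'))) (by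
          obtain ⟨i, _, hi⟩ := Finset.exists_min_image Finset.univ
            (fun i => dist x (t i)) Finset.univ_nonempty
          exact ⟨i, Finset.mem_filter.mpr
            ⟨Finset.mem_univ _, fun i' => hi i' (Finset.mem_univ _)⟩⟩)
        exact (Finset.mem_filter.mp hmem).2 i'
      have hi0_le : ∀ (t : Fin m → M) (i : Fin m),
          (∀ i', dist x (t i) ≤ dist x (t i')) → i0 t ≤ i := by
        intro t i hi
        exact Finset.min'_le _ _ (Finset.mem_filter.mpr ⟨Finset.mem_univ _, hi⟩)
      set y : (Fin m → M) → M := fun t => t (i0 t) with hydef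
      have hfib0 : ∀ i : Fin m, MeasurableSet {t : Fin m → M | i0 t = i} := by
        intro i
        have hchar : ∀ t : Fin m → M, i0 t = i ↔
            ((∀ i', dist x (t i) ≤ dist x (t i')) ∧
             ∀ i', i' < i → ¬ (∀ i'', dist x (t i') ≤ dist x (t i''))) := by
          intro t
          constructor
          · rintro rfl
            refine ⟨hi0_min t, fun i' hlt hmin => ?_⟩
            exact absurd (hi0_le t i' hmin) (not_le.mpr hlt)
          · rintro ⟨h1, h2⟩
            have hle : i0 t ≤ i := hi0_le t i h1
            rcases lt_or_eq_of_le hle with hlt | heq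
            · exact absurd (hi0_min t) (h2 _ hlt)
            · exact heq
        have hset : {t : Fin m → M | i0 t = i}
            = (⋂ i', {t : Fin m → M | dist x (t i) ≤ dist x (t i')}) ∩
              (⋂ i', ⋂ (_ : i' < i),
                (⋂ i'', {t : Fin m → M | dist x (t i') ≤ dist x (t i'')})ᶜ) := by
          ext t
          simp only [Set.mem_setOf_eq, Set.mem_inter_iff, Set.mem_iInter, Set.mem_compl_iff,
            not_forall]
          rw [hchar t]
          simp only [not_forall]
        rw [hset]
        have hm1 : ∀ (a b : Fin m), MeasurableSet {t : Fin m → M | dist x (t a) ≤ dist x (t b)} :=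
          fun a b => measurableSet_le (measurable_const.dist (measurable_pi_apply a))
            (measurable_const.dist (measurable_pi_apply b))
        exact (MeasurableSet.iInter fun i' => hm1 i i').inter
          (MeasurableSet.iInter fun i' => MeasurableSet.iInter fun _ =>
            (MeasurableSet.iInter fun i'' => hm1 i' i'').compl)
      have hy_meas : Measurable y := by
        intro B hB
        have hset : y ⁻¹' B = ⋃ i, ({t : Fin m → M | i0 t = i} ∩ (fun t => t i) ⁻¹' B) := by
          ext t
          simp only [Set.mem_preimage, Set.mem_iUnion, Set.mem_inter_iff, Set.mem_setOf_eq]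
          constructor
          · intro h
            exact ⟨i0 t, rfl, h⟩
          · rintro ⟨i, hi, h⟩
            show y t ∈ B
            rw [hydef]
            simp only []
            rw [hi]
            exact h
        rw [hset]
        exact MeasurableSet.iUnion fun i => (hfib0 i).inter (measurable_pi_apply i hB)
      set T : (Fin (n+m) → M) → (Fin n → M) × (Fin m → M) :=
        fun xs => (MeasurableEquiv.sumPiEquivProdPi (fun _ : Fin n ⊕ Fin m => M))
          ((MeasurableEquiv.piCongrLeft (fun _ : Fin (n+m) => M) finSumFinEquiv).symm xs)
        with hTdef
      have hT1 : ∀ (xs : Fin (n+m) → M) (j : Fin n), (T xs).1 j = xs (Fin.castAdd m j) := by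
        intro xs j
        simp [hTdef, MeasurableEquiv.sumPiEquivProdPi, MeasurableEquiv.piCongrLeft,
          Equiv.sumPiEquivProdPi, Equiv.piCongrLeft, Equiv.piCongrLeft']
      have hT2 : ∀ (xs : Fin (n+m) → M) (i : Fin m), (T xs).2 i = xs (Fin.natAdd n i) := by
        intro xs i
        simp [hTdef, MeasurableEquiv.sumPiEquivProdPi, MeasurableEquiv.piCongrLeft,
          Equiv.sumPiEquivProdPi, Equiv.piCongrLeft, Equiv.piCongrLeft']
      have hTmp : MeasurePreserving T P
          ((Measure.pi fun _ : Fin n => μ).prod (Measure.pi fun _ : Fin m => μ)) := by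
        have h1 := measurePreserving_piCongrLeft (fun _ : Fin (n+m) => μ) finSumFinEquiv
        have h2 := h1.symm (MeasurableEquiv.piCongrLeft (fun _ : Fin (n+m) => M) finSumFinEquiv)
        have h3 := measurePreserving_sumPiEquivProdPi (fun _ : Fin n ⊕ Fin m => μ)
        exact h3.comp h2
      set S' : Set ((Fin n → M) × (Fin m → M)) :=
        {p | ∀ j : Fin n, r ≤ dist (y p.2) (p.1 j)} with hS'def
      have hS'meas : MeasurableSet S' := by
        have hset : S' = ⋂ j : Fin n,
            {p : (Fin n → M) × (Fin m → M) | r ≤ dist (y p.2) (p.1 j)} := by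
          ext p
          simp only [hS'def, Set.mem_setOf_eq, Set.mem_iInter]
        rw [hset]
        exact MeasurableSet.iInter fun j => measurableSet_le measurable_const
          ((hy_meas.comp measurable_snd).dist ((measurable_pi_apply j).comp measurable_fst))
      have hsub : A r ⊆ T ⁻¹' S' := by
        intro xs hxs
        simp only [hAdef, Set.mem_setOf_eq] at hxs
        simp only [Set.mem_preimage, hS'def, Set.mem_setOf_eq]
        intro j
        rw [hT1 xs j]
        have htails : (T xs).2 = fun i => xs (Fin.natAdd n i) := funext (hT2 xs)
        rw [htails]
        set t : Fin m → M := fun i => xs (Fin.natAdd n i) with htdef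
        have hstar_tail : ∃ i : Fin m, star xs = Fin.natAdd n i := by
          by_contra hcon
          push_neg at hcon
          have hlt : (star xs).val < n := by
            by_contra hge
            push_neg at hge
            refine hcon ⟨(star xs).val - n, by omega⟩ ?_
            apply Fin.ext
            simp [Fin.natAdd]
            omega
          have hj := hxs ⟨(star xs).val, hlt⟩
          have heq : Fin.castAdd m ⟨(star xs).val, hlt⟩ = star xs := by
            apply Fin.ext
            simp
          rw [heq, dist_self] at hj
          linarith
        obtain ⟨i, hi⟩ := hstar_tail
        have hti : t i = xs (star xs) := by rw [htdef]; simp only []; rw [← hi]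
        have hyt : y t = xs (star xs) := by
          have harg : ∀ i', dist x (t i) ≤ dist x (t i') := by
            intro i'
            rw [hti]
            exact hstar_min xs _
          have h1 : i0 t ≤ i := hi0_le t i harg
          have h2 : dist x (t (i0 t)) ≤ dist x (xs (star xs)) := by
            rw [← hti]
            exact hi0_min t i
          have h3 : star xs ≤ Fin.natAdd n (i0 t) := hstar_tie xs _ h2
          have h4 : i ≤ i0 t := by
            rw [hi] at h3
            rw [Fin.le_def] at h3 ⊢
            simpa [Fin.natAdd] using h3
          have hii : i0 t = i := le_antisymm h1 h4
          rw [hydef]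
          simp only []
          rw [hii, hti]
        rw [hyt]
        exact (hxs j).le
      have hEbound : P (T ⁻¹' S') ≤ ENNReal.ofReal (Real.exp (-(Q * r^d * (n:ℝ)))) := by
        rw [hTmp.measure_preimage hS'meas.nullMeasurableSet]
        rw [Measure.prod_apply_symm hS'meas]
        have hslice : ∀ t : Fin m → M, (fun u : Fin n → M => (u, t)) ⁻¹' S'
            = Set.pi Set.univ (fun _ : Fin n => {w : M | r ≤ dist (y t) w}) := by
          intro t
          ext u
          simp [hS'def, Set.mem_pi]
        have hballc : ∀ z : M, μ {w : M | r ≤ dist z w}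
            ≤ ENNReal.ofReal (Real.exp (-(Q * r^d))) := by
          intro z
          have hcompl : {w : M | r ≤ dist z w} = (Metric.ball z r)ᶜ := by
            ext w
            simp [Metric.mem_ball, not_lt, dist_comm]
          rw [hcompl, measure_compl measurableSet_ball (measure_ne_top μ _), measure_univ]
          have h2 : ENNReal.ofReal (Q * r^d) ≤ μ (Metric.ball z r) := hμ z r hr hrR
          calc (1:ℝ≥0∞) - μ (Metric.ball z r) ≤ 1 - ENNReal.ofReal (Q * r^d) :=
            tsub_le_tsub_left h2 1
          _ ≤ ENNReal.ofReal (Real.exp (-(Q * r^d))) := by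
              rw [tsub_le_iff_right, ← ENNReal.ofReal_add (Real.exp_nonneg _) (by positivity),
                ← ENNReal.ofReal_one]
              exact ENNReal.ofReal_le_ofReal (by nlinarith [Real.add_one_le_exp (-(Q * r^d))])
        calc ∫⁻ t, (Measure.pi fun _ : Fin n => μ) ((fun u => (u, t)) ⁻¹' S')
              ∂(Measure.pi fun _ : Fin m => μ)
            ≤ ∫⁻ _t, ENNReal.ofReal (Real.exp (-(Q * r^d * (n:ℝ))))
              ∂(Measure.pi fun _ : Fin m => μ) := by
              refine lintegral_mono (fun t => ?_)
              rw [hslice t, Measure.pi_pi]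
              calc ∏ _j : Fin n, μ {w : M | r ≤ dist (y t) w}
                  ≤ ∏ _j : Fin n, ENNReal.ofReal (Real.exp (-(Q * r^d))) :=
                    Finset.prod_le_prod' (fun j _ => hballc (y t))
              _ = ENNReal.ofReal (Real.exp (-(Q * r^d))) ^ n := by
                    rw [Finset.prod_const, Finset.card_univ, Fintype.card_fin]
              _ = ENNReal.ofReal (Real.exp (-(Q * r^d)) ^ n) :=
                    (ENNReal.ofReal_pow (Real.exp_nonneg _) n).symm
              _ = ENNReal.ofReal (Real.exp (-(Q * r^d * (n:ℝ)))) := by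
                    rw [← Real.exp_nat_mul]
                    congr 1
                    ring
          _ = ENNReal.ofReal (Real.exp (-(Q * r^d * (n:ℝ)))) := by
              rw [lintegral_const]
              simp
      exact le_trans (measure_mono hsub) hEbound
  -- integrand pieces
  set g : (Fin (n+m) → M) → ℝ := fun xs =>
      c^2*α^2 + (∑ k ∈ Finset.Ico 1 K,
        Set.indicator (A ((k:ℝ)*α)) (fun _ => c^2*((2*(k:ℝ)+1)*α^2)) xs)
      + Set.indicator (A R) (fun _ => D^2) xs with hgdef
  have hint_ind : ∀ (r e : ℝ), Integrable (Set.indicator (A r) (fun _ => e)) P :=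
    fun r e => (integrable_const e).indicator (hA_meas r)
  have hint_sum : Integrable (fun xs => ∑ k ∈ Finset.Ico 1 K,
      Set.indicator (A ((k:ℝ)*α)) (fun _ => c^2*((2*(k:ℝ)+1)*α^2)) xs) P :=
    integrable_finset_sum _ (fun k _ => hint_ind _ _)
  have hg_int : Integrable g P := by
    rw [hgdef]
    exact (((integrable_const (c^2*α^2)).add hint_sum).add (hint_ind R (D^2)))
  have hf2_int : Integrable (fun xs => f xs^2) P := by
    refine Integrable.mono' (integrable_const (D^2))
      ((hf_meas.pow_const 2).aestronglyMeasurable) ?_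
    refine Filter.Eventually.of_forall (fun xs => ?_)
    rw [Real.norm_of_nonneg (by positivity)]
    exact pow_le_pow_left₀ dist_nonneg (Metric.dist_le_diam_of_mem hMbdd trivial trivial) 2
  -- pointwise bound
  have hfg : ∀ᵐ xs ∂P, f xs^2 ≤ g xs := by
    filter_upwards [happrox] with xs hxs
    have hne : (Finset.univ : Finset (Fin n)).Nonempty := Finset.univ_nonempty
    set Zx : ℝ := Finset.inf' Finset.univ hne
      (fun j => dist (xs (star xs)) (xs (Fin.castAdd m j))) with hZxdef
    have hZx0 : 0 ≤ Zx := Finset.le_inf' hne _ (fun j _ => dist_nonneg)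
    have hmemA : ∀ r : ℝ, xs ∈ A r ↔ r < Zx := by
      intro r
      rw [hZxdef, Finset.lt_inf'_iff]
      simp only [hAdef, Set.mem_setOf_eq]
      constructor
      · intro h j _
        exact h j
      · intro h j
        exact h j (Finset.mem_univ j)
    have hfZ : f xs ≤ c * Zx := by
      obtain ⟨J, _, hJ⟩ := Finset.exists_mem_eq_inf' hne
        (fun j => dist (xs (star xs)) (xs (Fin.castAdd m j)))
      have h1 := (hxs (Fin.castAdd m (G xs)) (star xs)).1
      have h2 := hG_min xs J
      have h3 := (hxs (Fin.castAdd m J) (star xs)).2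
      have hdc1 : dist (xs (Fin.castAdd m (G xs))) (xs (star xs)) = f xs := dist_comm _ _
      have hdc2 : dist (xs (Fin.castAdd m J)) (xs (star xs)) = Zx := by
        rw [dist_comm]
        exact hJ.symm
      rw [hdc1] at h1
      rw [hdc2] at h3
      have hchain : (1-δ) * f xs ≤ (1+δ) * Zx := by linarith
      rw [hcdef, div_mul_eq_mul_div, le_div_iff₀ hδ', mul_comm]
      exact hchain
    have hfD : f xs ≤ D := Metric.dist_le_diam_of_mem hMbdd trivial trivial
    have hf0 : 0 ≤ f xs := dist_nonneg
    have hindnn : ∀ (r e : ℝ), 0 ≤ e → 0 ≤ Set.indicator (A r) (fun _ => e) xs :=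
      fun r e he => Set.indicator_apply_nonneg (fun _ => he)
    have hc2 : (0:ℝ) < c^2 := by positivity
    rcases le_or_gt Zx R with hZR | hZR
    · have hL := aux_levels hα hZx0 K hK1 (hZR.trans hKR)
      have hfZ2 : f xs^2 ≤ c^2 * Zx^2 := by
        rw [show c^2*Zx^2 = (c*Zx)^2 by ring]
        exact pow_le_pow_left₀ hf0 hfZ 2
      have hmain : c^2 * Zx^2 ≤ c^2*α^2 + ∑ k ∈ Finset.Ico 1 K,
          Set.indicator (A ((k:ℝ)*α)) (fun _ => c^2*((2*(k:ℝ)+1)*α^2)) xs := by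
        have hmul := mul_le_mul_of_nonneg_left hL hc2.le
        rw [mul_add, Finset.mul_sum] at hmul
        refine hmul.trans (le_of_eq ?_)
        congr 1
        refine Finset.sum_congr rfl (fun k _ => ?_)
        rw [Set.indicator_apply]
        by_cases hmem : xs ∈ A ((k:ℝ)*α)
        · rw [if_pos hmem, if_pos ((hmemA _).mp hmem)]
          ring
        · rw [if_neg hmem, if_neg (fun hlt => hmem ((hmemA _).mpr hlt))]
          ring
      have hlast : 0 ≤ Set.indicator (A R) (fun _ => D^2) xs := hindnn _ _ (by positivity)
      calc f xs^2 ≤ c^2 * Zx^2 := hfZ2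
      _ ≤ _ := hmain
      _ ≤ g xs := by
          rw [hgdef]
          simp only []
          linarith
    · have hmem : xs ∈ A R := (hmemA R).mpr hZR
      have h1 : f xs^2 ≤ D^2 := pow_le_pow_left₀ hf0 hfD 2
      have h2 : 0 ≤ ∑ k ∈ Finset.Ico 1 K,
          Set.indicator (A ((k:ℝ)*α)) (fun _ => c^2*((2*(k:ℝ)+1)*α^2)) xs :=
        Finset.sum_nonneg (fun k _ => hindnn _ _ (by positivity))
      rw [hgdef]
      simp only []
      rw [Set.indicator_of_mem hmem]
      have h3 : (0:ℝ) ≤ c^2*α^2 := by positivity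
      linarith
  -- value of ∫ g
  have hgval : ∫ xs, g xs ∂P = c^2*α^2
      + (∑ k ∈ Finset.Ico 1 K, (P (A ((k:ℝ)*α))).toReal * (c^2*((2*(k:ℝ)+1)*α^2)))
      + (P (A R)).toReal * D^2 := by
    have e1 : ∫ xs, g xs ∂P = (∫ xs, (c^2*α^2 + ∑ k ∈ Finset.Ico 1 K,
        Set.indicator (A ((k:ℝ)*α)) (fun _ => c^2*((2*(k:ℝ)+1)*α^2)) xs) ∂P)
        + ∫ xs, Set.indicator (A R) (fun _ => D^2) xs ∂P := by
      rw [hgdef]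
      exact integral_add ((integrable_const (c^2*α^2)).add hint_sum) (hint_ind R (D^2))
    have e2 : ∫ xs, (c^2*α^2 + ∑ k ∈ Finset.Ico 1 K,
        Set.indicator (A ((k:ℝ)*α)) (fun _ => c^2*((2*(k:ℝ)+1)*α^2)) xs) ∂P
        = (∫ _xs, (c^2*α^2) ∂P) + ∫ xs, (∑ k ∈ Finset.Ico 1 K,
          Set.indicator (A ((k:ℝ)*α)) (fun _ => c^2*((2*(k:ℝ)+1)*α^2)) xs) ∂P :=
      integral_add (integrable_const (c^2*α^2)) hint_sum
    have e3 : ∫ xs, (∑ k ∈ Finset.Ico 1 K,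
        Set.indicator (A ((k:ℝ)*α)) (fun _ => c^2*((2*(k:ℝ)+1)*α^2)) xs) ∂P
        = ∑ k ∈ Finset.Ico 1 K, ∫ xs,
          Set.indicator (A ((k:ℝ)*α)) (fun _ => c^2*((2*(k:ℝ)+1)*α^2)) xs ∂P :=
      integral_finset_sum _ (fun k _ => hint_ind _ _)
    rw [e1, e2, e3, integral_const]
    simp only [measure_univ, ENNReal.toReal_one, one_smul, probReal_univ]
    congr 1
    · congr 1
      refine Finset.sum_congr rfl (fun k _ => ?_)
      rw [integral_indicator_const _ (hA_meas _), smul_eq_mul, Measure.real]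
    · rw [integral_indicator_const _ (hA_meas _), smul_eq_mul, Measure.real]
  -- probability bounds
  have hPA : ∀ k ∈ Finset.Ico 1 K, (P (A ((k:ℝ)*α))).toReal ≤ q^k := by
    intro k hk
    obtain ⟨hk1, hk2⟩ := Finset.mem_Ico.mp hk
    have hk0 : (0:ℝ) < (k:ℝ) := by exact_mod_cast hk1
    have hr0 : 0 < (k:ℝ)*α := by positivity
    have h2 : (P (A ((k:ℝ)*α))).toReal ≤ Real.exp (-(Q * ((k:ℝ)*α)^d * (n:ℝ))) :=
      ENNReal.toReal_le_of_le_ofReal (Real.exp_nonneg _) (htail _ hr0 (hkR k hk2))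
    refine h2.trans ?_
    have h3 : Q * ((k:ℝ)*α)^d * (n:ℝ) = Q * (k:ℝ)^d := by
      rw [mul_pow, hαd]
      field_simp
    rw [h3]
    have h4 : (k:ℝ) ≤ (k:ℝ)^d := le_self_pow₀ (by exact_mod_cast hk1) (by omega)
    calc Real.exp (-(Q*(k:ℝ)^d)) ≤ Real.exp (-(Q*(k:ℝ))) :=
      Real.exp_le_exp.mpr (by nlinarith)
    _ = q^k := by
        rw [hqdef, ← Real.exp_nat_mul]
        congr 1
        ring
  have hPB : (P (A R)).toReal ≤ Real.exp (-Q*R^d*(n:ℝ)) := by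
    have h1 := ENNReal.toReal_le_of_le_ofReal (Real.exp_nonneg _) (htail R hR le_rfl)
    rw [show -Q*R^d*(n:ℝ) = -(Q*R^d*(n:ℝ)) by ring]
    exact h1
  -- final computation
  have hsum_bound : 1 + ∑ k ∈ Finset.Ico 1 K, (2*(k:ℝ)+1)*q^k ≤ (1+q)/(1-q)^2 := by
    have h0 : ∑ k ∈ Finset.range K, (2*(k:ℝ)+1)*q^k
        = 1 + ∑ k ∈ Finset.Ico 1 K, (2*(k:ℝ)+1)*q^k := by
      rw [Finset.range_eq_Ico]
      simpa using Finset.sum_eq_sum_Ico_succ_bot (show 0 < K by omega)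
        (fun k => (2*(k:ℝ)+1)*q^k)
    rw [← h0]
    exact aux_sum_bound hq0.le hq1 K
  have hcoef : c^2 * ((1+q)/(1-q)^2) ≤ 2*(1+δ)^2/((1-δ)^2*(1-q)^2) := by
    have hq1' : (0:ℝ) < 1 - q := by linarith
    rw [hcdef, div_pow, div_mul_div_comm]
    rw [div_le_div_iff₀ (by positivity) (by positivity)]
    have ht : (0:ℝ) ≤ (1+δ)^2*((1-δ)^2*(1-q)^2) := by positivity
    nlinarith [mul_nonneg (by linarith : (0:ℝ) ≤ 1 - q) ht]
  have hfinal : ∫ xs, f xs^2 ∂P ≤ 2*(1+δ)^2/((1-δ)^2*(1-q)^2) * α^2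
      + D^2 * Real.exp (-Q*R^d*(n:ℝ)) := by
    calc ∫ xs, f xs^2 ∂P ≤ ∫ xs, g xs ∂P := integral_mono_ae hf2_int hg_int hfg
    _ = c^2*α^2 + (∑ k ∈ Finset.Ico 1 K,
          (P (A ((k:ℝ)*α))).toReal * (c^2*((2*(k:ℝ)+1)*α^2)))
        + (P (A R)).toReal * D^2 := hgval
    _ ≤ c^2*α^2 + (∑ k ∈ Finset.Ico 1 K, q^k * (c^2*((2*(k:ℝ)+1)*α^2)))
        + Real.exp (-Q*R^d*(n:ℝ)) * D^2 := by
        have hs : ∑ k ∈ Finset.Ico 1 K, (P (A ((k:ℝ)*α))).toReal * (c^2*((2*(k:ℝ)+1)*α^2))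
            ≤ ∑ k ∈ Finset.Ico 1 K, q^k * (c^2*((2*(k:ℝ)+1)*α^2)) := by
          refine Finset.sum_le_sum (fun k hk => ?_)
          exact mul_le_mul_of_nonneg_right (hPA k hk) (by positivity)
        have hb : (P (A R)).toReal * D^2 ≤ Real.exp (-Q*R^d*(n:ℝ)) * D^2 :=
          mul_le_mul_of_nonneg_right hPB (by positivity)
        linarith
    _ = c^2*α^2 * (1 + ∑ k ∈ Finset.Ico 1 K, (2*(k:ℝ)+1)*q^k)
        + D^2 * Real.exp (-Q*R^d*(n:ℝ)) := by
        have hss : ∑ k ∈ Finset.Ico 1 K, q^k * (c^2*((2*(k:ℝ)+1)*α^2))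
            = ∑ k ∈ Finset.Ico 1 K, c^2*α^2*((2*(k:ℝ)+1)*q^k) :=
          Finset.sum_congr rfl (fun k _ => by ring)
        rw [hss, mul_add, mul_one, Finset.mul_sum]
        ring
    _ ≤ c^2*α^2 * ((1+q)/(1-q)^2) + D^2 * Real.exp (-Q*R^d*(n:ℝ)) := by
        have := mul_le_mul_of_nonneg_left hsum_bound (show (0:ℝ) ≤ c^2*α^2 by positivity)
        linarith
    _ ≤ 2*(1+δ)^2/((1-δ)^2*(1-q)^2) * α^2 + D^2 * Real.exp (-Q*R^d*(n:ℝ)) := by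
        have h1 : c^2*α^2 * ((1+q)/(1-q)^2) = (c^2 * ((1+q)/(1-q)^2)) * α^2 := by ring
        rw [h1]
        have := mul_le_mul_of_nonneg_right hcoef (sq_nonneg α)
        linarith
  rw [← hα2]
  exact hfinal
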